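/- Let α, β ∈ ℝⁿ. Then α is majorized by β if and only if there exists an n×n doubly stochastic matrix P such that α = βP (i.e., α_j = Σ_{i=1}^n β_i P_{ij} for every j). -/

import Mathlib

open Finset Matrix

/-- Sum of the `k` largest components of a vector in `ℝⁿ`:
the largest sum of `k` components. -/
noncomputable def topSum {n : ℕ} (a : Fin n → ℝ) (k : ℕ) : ℝ :=
  sSup {t : ℝ | ∃ s : Finset (Fin n), s.card = k ∧ t = ∑ i ∈ s, a i}

/-- `Majorizes b a` means `β = b` majorizes `α = a`, i.e. `a ≤_m b`:
equal total sums, and for every `k = 1, …, n-1` the sum of the `k` largest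
components of `a` is at most that of `b`. -/
def Majorizes {n : ℕ} (b a : Fin n → ℝ) : Prop :=
  (∑ i, a i = ∑ i, b i) ∧ ∀ k : ℕ, 1 ≤ k → k ≤ n - 1 → topSum a k ≤ topSum b k

/-- A doubly stochastic matrix: non-negative entries, all rows and all columns sum to 1. -/
def IsDoublyStochastic {n : ℕ} (P : Matrix (Fin n) (Fin n) ℝ) : Prop :=
  (∀ i j, 0 ≤ P i j) ∧ (∀ i, ∑ j, P i j = 1) ∧ (∀ j, ∑ i, P i j = 1)

/-- Hardy–Littlewood–Pólya: `a` is majorized by `b` iff `a = b P` for some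
doubly stochastic matrix `P`. -/
lemma topSum_set_eq {n : ℕ} (a : Fin n → ℝ) (k : ℕ) :
    {t : ℝ | ∃ s : Finset (Fin n), s.card = k ∧ t = ∑ i ∈ s, a i}
      = ↑((univ.powersetCard k).image (fun s => ∑ i ∈ s, a i)) := by
  ext t
  simp only [Set.mem_setOf_eq, coe_image, Set.mem_image, mem_coe, mem_powersetCard_univ]
  constructor
  · rintro ⟨s, h1, rfl⟩; exact ⟨s, h1, rfl⟩
  · rintro ⟨s, h1, rfl⟩; exact ⟨s, h1, rfl⟩

lemma le_topSum {n : ℕ} (a : Fin n → ℝ) {k : ℕ} {s : Finset (Fin n)} (hs : s.card = k) :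
    ∑ i ∈ s, a i ≤ topSum a k := by
  apply le_csSup
  · rw [topSum_set_eq]; exact (finite_toSet _).bddAbove
  · exact ⟨s, hs, rfl⟩

lemma topSum_le {n : ℕ} (a : Fin n → ℝ) {k : ℕ} (hk : k ≤ n) {t : ℝ}
    (h : ∀ s : Finset (Fin n), s.card = k → ∑ i ∈ s, a i ≤ t) : topSum a k ≤ t := by
  apply csSup_le
  · obtain ⟨s, -, hs⟩ := Finset.exists_subset_card_eq (s := (univ : Finset (Fin n))) (n := k) (by simpa using hk)
    exact ⟨∑ i ∈ s, a i, s, hs, rfl⟩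
  · rintro x ⟨s, hs, rfl⟩; exact h s hs

lemma topSum_comp_perm {n : ℕ} (a : Fin n → ℝ) (ρ : Equiv.Perm (Fin n)) (k : ℕ) :
    topSum (a ∘ ρ) k = topSum a k := by
  unfold topSum
  congr 1
  ext t
  simp only [Set.mem_setOf_eq, Function.comp_apply]
  constructor
  · rintro ⟨s, hs, rfl⟩
    refine ⟨s.map ρ.toEmbedding, by simp [hs], ?_⟩
    rw [Finset.sum_map]; rfl
  · rintro ⟨s, hs, rfl⟩
    refine ⟨s.map ρ.symm.toEmbedding, by simp [hs], ?_⟩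
    rw [Finset.sum_map]
    simp

/-- the set of the `k` largest indices -/
def sufSet (n k : ℕ) : Finset (Fin n) := {i : Fin n | n - k ≤ i.val}

lemma sufSet_eq_Ici {n k : ℕ} (h : n - k < n) :
    sufSet n k = Finset.Ici (⟨n - k, h⟩ : Fin n) := by
  ext i; simp [sufSet, Fin.le_def]

lemma card_sufSet {n k : ℕ} (hk : k ≤ n) : (sufSet n k).card = k := by
  rcases Nat.eq_zero_or_pos n with rfl | hn
  · interval_cases k; simp [sufSet]
  rcases Nat.eq_zero_or_pos k with rfl | hk1
  · have : sufSet n 0 = ∅ := by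
      ext i; simp only [sufSet, Finset.mem_filter, Finset.mem_univ, true_and,
        Finset.notMem_empty, iff_false, not_le, Nat.sub_zero]
      exact i.isLt
    simp [this]
  rw [sufSet_eq_Ici (by omega), Fin.card_Ici]
  simp only [Fin.val_mk]
  omega

lemma mem_sufSet {n k : ℕ} {i : Fin n} : i ∈ sufSet n k ↔ n - k ≤ i.val := by
  simp [sufSet]

lemma Monotone.topSum_eq {n k : ℕ} {v : Fin n → ℝ} (hv : Monotone v)
    (hk1 : 1 ≤ k) (hkn : k ≤ n) : topSum v k = ∑ i ∈ sufSet n k, v i := by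
  have hnk : n - k < n := by omega
  set p : Fin n := ⟨n - k, hnk⟩ with hp
  apply le_antisymm
  · apply topSum_le v hkn
    intro s hs
    have hcard : (s \ sufSet n k).card = (sufSet n k \ s).card := by
      have h1 := Finset.card_sdiff_add_card_inter s (sufSet n k)
      have h2 := Finset.card_sdiff_add_card_inter (sufSet n k) s
      rw [Finset.inter_comm] at h2
      rw [hs] at h1
      rw [card_sufSet hkn] at h2
      omega
    have key : ∑ i ∈ s \ sufSet n k, v i ≤ ∑ i ∈ sufSet n k \ s, v i := by
      calc ∑ i ∈ s \ sufSet n k, v i ≤ (s \ sufSet n k).card • v p := by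
            apply Finset.sum_le_card_nsmul
            intro i hi
            apply hv
            have := (Finset.mem_sdiff.1 hi).2
            rw [mem_sufSet] at this
            exact le_of_lt (by simpa [Fin.lt_def, hp] using by omega)
        _ = (sufSet n k \ s).card • v p := by rw [hcard]
        _ ≤ ∑ i ∈ sufSet n k \ s, v i := by
            apply Finset.card_nsmul_le_sum
            intro i hi
            apply hv
            have := mem_sufSet.1 (Finset.mem_sdiff.1 hi).1
            simpa [Fin.le_def, hp] using this
    calc ∑ i ∈ s, v i = ∑ i ∈ s ∩ sufSet n k, v i + ∑ i ∈ s \ sufSet n k, v i :=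
          (Finset.sum_inter_add_sum_sdiff _ _ _).symm
      _ ≤ ∑ i ∈ s ∩ sufSet n k, v i + ∑ i ∈ sufSet n k \ s, v i := by linarith
      _ = ∑ i ∈ sufSet n k, v i := by
          rw [Finset.inter_comm]
          exact Finset.sum_inter_add_sum_sdiff _ _ _
  · exact le_topSum v (card_sufSet hkn)

lemma prefix_sum_eq {n m : ℕ} (d : Fin n → ℝ) (hm : m ≤ n) :
    ∑ l ∈ Finset.range m, (if h : l < n then d ⟨l, h⟩ else 0)
      = ∑ i, d i - ∑ i ∈ sufSet n (n - m), d i := by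
  set D : ℕ → ℝ := fun l => if h : l < n then d ⟨l, h⟩ else 0 with hD
  have h1 : ∑ l ∈ Finset.range m, D l = ∑ l ∈ (Finset.range n).filter (· < m), D l := by
    congr 1
    ext l
    simp only [Finset.mem_range, Finset.mem_filter]
    omega
  have h2 : ∑ l ∈ (Finset.range n).filter (· < m), D l
      = ∑ i ∈ Finset.univ.filter (fun i : Fin n => i.val < m), d i := by
    rw [Finset.sum_filter, Finset.sum_filter, ← Fin.sum_univ_eq_sum_range]
    apply Finset.sum_congr rfl
    intro i _
    simp [hD, i.isLt]
  have h3 : Finset.univ.filter (fun i : Fin n => ¬ i.val < m) = sufSet n (n - m) := by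
    ext i
    simp only [Finset.mem_filter, Finset.mem_univ, true_and, mem_sufSet, not_lt]
    omega
  have h4 := Finset.sum_filter_add_sum_filter_not Finset.univ (fun i : Fin n => i.val < m) d
  rw [h1, h2, ← h3]
  linarith

lemma abel_le {n : ℕ} {u v w : Fin n → ℝ} (hu : Monotone u)
    (hsuf : ∀ k, 1 ≤ k → k ≤ n - 1 → ∑ i ∈ sufSet n k, v i ≤ ∑ i ∈ sufSet n k, w i)
    (htot : ∑ i, v i = ∑ i, w i) :
    ∑ i, u i * v i ≤ ∑ i, u i * w i := by
  rcases Nat.eq_zero_or_pos n with rfl | hn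
  · simp
  set d : Fin n → ℝ := fun i => w i - v i with hd
  have hgoal : (0:ℝ) ≤ ∑ i, u i * d i → ∑ i, u i * v i ≤ ∑ i, u i * w i := by
    intro h
    have : ∑ i, u i * d i = ∑ i, u i * w i - ∑ i, u i * v i := by
      simp [hd, mul_sub, Finset.sum_sub_distrib]
    linarith
  apply hgoal
  set U : ℕ → ℝ := fun j => u ⟨min j (n-1), by omega⟩ with hU
  set D : ℕ → ℝ := fun l => if h : l < n then d ⟨l, h⟩ else 0 with hD
  have hstep : ∑ i, u i * d i = ∑ j ∈ Finset.range n, U j * D j := by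
    rw [← Fin.sum_univ_eq_sum_range (fun j => U j * D j) n]
    apply Finset.sum_congr rfl
    intro i _
    have h1 : U i.val = u i := by
      simp only [hU]
      congr 1
      ext
      simp only [Fin.val_mk]
      omega
    have h2 : D i.val = d i := by simp [hD, i.isLt]
    rw [h1, h2]
  rw [hstep]
  have parts := Finset.sum_range_by_parts U D n
  simp only [smul_eq_mul] at parts
  rw [parts]
  have hDtot : ∑ l ∈ Finset.range n, D l = 0 := by
    have := prefix_sum_eq d (le_refl n)
    simp only [Nat.sub_self] at this
    have hempty : sufSet n 0 = ∅ := by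
      ext i
      simp only [mem_sufSet, Nat.sub_zero, Finset.notMem_empty, iff_false, not_le]
      exact i.isLt
    rw [hempty] at this
    simp only [Finset.sum_empty, sub_zero] at this
    rw [this]
    simp only [hd, Finset.sum_sub_distrib]
    linarith
  rw [hDtot, mul_zero, zero_sub, le_neg, neg_zero]
  apply Finset.sum_nonpos
  intro j hj
  rw [Finset.mem_range] at hj
  have hfac : 0 ≤ U (j+1) - U j := by
    simp only [hU, sub_nonneg]
    apply hu
    simp only [Fin.mk_le_mk]
    omega
  have hpre : ∑ l ∈ Finset.range (j+1), D l ≤ 0 := by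
    rw [prefix_sum_eq d (by omega)]
    have hk1 : 1 ≤ n - (j+1) := by omega
    have hk2 : n - (j+1) ≤ n - 1 := by omega
    have h5 : ∑ i ∈ sufSet n (n-(j+1)), v i ≤ ∑ i ∈ sufSet n (n-(j+1)), w i :=
      hsuf _ hk1 hk2
    simp only [hd, Finset.sum_sub_distrib]
    rw [htot]
    linarith
  exact mul_nonpos_of_nonneg_of_nonpos hfac hpre

lemma core_ineq {n : ℕ} {a b : Fin n → ℝ} (h : Majorizes b a) (c : Fin n → ℝ) :
    ∃ σ : Equiv.Perm (Fin n), ∑ j, c j * a j ≤ ∑ j, c j * b (σ j) := by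
  classical
  set π := Tuple.sort c with hπ
  set ρ := Tuple.sort a with hρ
  set σ' := Tuple.sort b with hσ'
  have hu : Monotone (c ∘ π) := Tuple.monotone_sort c
  have hv : Monotone (a ∘ ρ) := Tuple.monotone_sort a
  have hw : Monotone (b ∘ σ') := Tuple.monotone_sort b
  refine ⟨σ' * π⁻¹, ?_⟩
  have step1 : ∑ j, c j * a j = ∑ i, (c ∘ π) i * a (π i) :=
    (Equiv.sum_comp π (fun j => c j * a j)).symm
  have step2 : ∑ i, (c ∘ π) i * a (π i) ≤ ∑ i, (c ∘ π) i * (a ∘ ρ) i := by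
    have hmono : Monovary (c ∘ π) (a ∘ ρ) := hu.monovary hv
    have := hmono.sum_mul_comp_perm_le_sum_mul (σ := ρ⁻¹ * π)
    convert this using 2 with i
    · rfl
    simp [Equiv.Perm.mul_apply]
  have step3 : ∑ i, (c ∘ π) i * (a ∘ ρ) i ≤ ∑ i, (c ∘ π) i * (b ∘ σ') i := by
    apply abel_le hu
    · intro k hk1 hk2
      have hkn : k ≤ n := by omega
      rw [← hv.topSum_eq hk1 hkn, ← hw.topSum_eq hk1 hkn, topSum_comp_perm, topSum_comp_perm]
      exact h.2 k hk1 hk2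
    · simpa only [Function.comp_apply, Equiv.sum_comp ρ a, Equiv.sum_comp σ' b] using h.1
  have step4 : ∑ i, (c ∘ π) i * (b ∘ σ') i = ∑ j, c j * b ((σ' * π⁻¹) j) := by
    rw [← Equiv.sum_comp π (fun j => c j * b ((σ' * π⁻¹) j))]
    apply Finset.sum_congr rfl
    intro i _
    simp [Equiv.Perm.mul_apply]
  rw [step1, ← step4]
  exact le_trans step2 step3

lemma vecMul_permMatrix {n : ℕ} (b : Fin n → ℝ) (σ : Equiv.Perm (Fin n)) (j : Fin n) :
    (b ᵥ* (σ.permMatrix ℝ)) j = b (σ⁻¹ j) := by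
  simp only [Matrix.vecMul, dotProduct, Equiv.Perm.permMatrix, PEquiv.toMatrix_apply,
    Equiv.toPEquiv_apply, Option.mem_def, Option.some.injEq, mul_ite, mul_one, mul_zero]
  rw [Finset.sum_congr rfl (fun i (_ : i ∈ univ) =>
    if_congr (Equiv.apply_eq_iff_eq_symm_apply σ) rfl rfl)]
  simp [Equiv.Perm.inv_def]

lemma mem_hull_of_majorizes {n : ℕ} {a b : Fin n → ℝ} (h : Majorizes b a) :
    a ∈ convexHull ℝ (Set.range (fun σ : Equiv.Perm (Fin n) => b ∘ σ)) := by
  by_contra hc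
  have hfin : (Set.range (fun σ : Equiv.Perm (Fin n) => b ∘ σ)).Finite := Set.finite_range _
  have hcl : IsClosed (convexHull ℝ (Set.range (fun σ : Equiv.Perm (Fin n) => b ∘ σ))) :=
    (hfin.isCompact_convexHull ℝ).isClosed
  obtain ⟨f, u, hfu, hua⟩ :=
    geometric_hahn_banach_closed_point (convex_convexHull ℝ _) hcl hc
  set c : Fin n → ℝ := fun j => f (fun k => if j = k then 1 else 0) with hcdef
  have hf : ∀ x : Fin n → ℝ, f x = ∑ j, c j * x j := by
    intro x
    conv_lhs => rw [pi_eq_sum_univ x]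
    rw [map_sum]
    apply Finset.sum_congr rfl
    intro j _
    rw [f.map_smul, smul_eq_mul, mul_comm]
  obtain ⟨σ, hσ⟩ := core_ineq h c
  have hmem : (b ∘ σ) ∈ convexHull ℝ (Set.range (fun σ : Equiv.Perm (Fin n) => b ∘ σ)) :=
    subset_convexHull ℝ _ ⟨σ, rfl⟩
  have h1 : f a ≤ f (b ∘ σ) := by
    rw [hf, hf]
    simpa using hσ
  have h2 := hfu _ hmem
  linarith

lemma hard_dir {n : ℕ} {a b : Fin n → ℝ} (h : Majorizes b a) :
    ∃ P : Matrix (Fin n) (Fin n) ℝ, IsDoublyStochastic P ∧ a = b ᵥ* P := by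
  classical
  have hmem := mem_hull_of_majorizes h
  rw [_root_.convexHull_eq] at hmem
  obtain ⟨ι, t, w, z, hw0, hw1, hz, hcm⟩ := hmem
  rw [Finset.centerMass_eq_of_sum_1 _ _ hw1] at hcm
  -- choose permutations
  have hτ : ∀ i ∈ t, ∃ σ : Equiv.Perm (Fin n), b ∘ σ = z i := fun i hi => hz i hi
  set τ : ι → Equiv.Perm (Fin n) := fun i =>
    if hi : i ∈ t then (hτ i hi).choose else 1 with hτdef
  have hτ' : ∀ i ∈ t, b ∘ (τ i) = z i := by
    intro i hi
    simp only [hτdef, dif_pos hi]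
    exact (hτ i hi).choose_spec
  set P : Matrix (Fin n) (Fin n) ℝ := ∑ i ∈ t, w i • ((τ i)⁻¹.permMatrix ℝ) with hP
  have hPapp : ∀ k j, P k j = ∑ i ∈ t, w i * ((τ i)⁻¹.permMatrix ℝ) k j := by
    intro k j
    rw [hP, Matrix.sum_apply]
    apply Finset.sum_congr rfl
    intro i _
    rw [Matrix.smul_apply, smul_eq_mul]
  have hperm_ds : ∀ i : ι, ((τ i)⁻¹.permMatrix ℝ) ∈ doublyStochastic ℝ (Fin n) :=
    fun i => permMatrix_mem_doublyStochastic
  refine ⟨P, ⟨?_, ?_, ?_⟩, ?_⟩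
  · intro k j
    rw [hPapp]
    exact Finset.sum_nonneg fun i hi =>
      mul_nonneg (hw0 i hi) (nonneg_of_mem_doublyStochastic (hperm_ds i))
  · intro k
    simp only [hPapp]
    rw [Finset.sum_comm]
    rw [← hw1]
    apply Finset.sum_congr rfl
    intro i hi
    rw [← Finset.mul_sum, sum_row_of_mem_doublyStochastic (hperm_ds i), mul_one]
  · intro j
    simp only [hPapp]
    rw [Finset.sum_comm]
    rw [← hw1]
    apply Finset.sum_congr rfl
    intro i hi
    rw [← Finset.mul_sum, sum_col_of_mem_doublyStochastic (hperm_ds i), mul_one]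
  · funext j
    have key : (b ᵥ* P) j = ∑ i ∈ t, (w i • z i) j := by
      calc (b ᵥ* P) j = ∑ k, b k * P k j := rfl
        _ = ∑ k, ∑ i ∈ t, b k * (w i * ((τ i)⁻¹.permMatrix ℝ) k j) := by
            apply Finset.sum_congr rfl
            intro k _
            rw [hPapp, Finset.mul_sum]
        _ = ∑ i ∈ t, ∑ k, b k * (w i * ((τ i)⁻¹.permMatrix ℝ) k j) := Finset.sum_comm
        _ = ∑ i ∈ t, (w i • z i) j := by
            apply Finset.sum_congr rfl
            intro i hi
            have hvp : ∑ k, b k * (((τ i)⁻¹.permMatrix ℝ) k j) = b (τ i j) := by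
              have h2 := vecMul_permMatrix b (τ i)⁻¹ j
              simp only [inv_inv] at h2
              rw [← h2]
              rfl
            calc ∑ k, b k * (w i * ((τ i)⁻¹.permMatrix ℝ) k j)
                = w i * ∑ k, b k * (((τ i)⁻¹.permMatrix ℝ) k j) := by
                  rw [Finset.mul_sum]; apply Finset.sum_congr rfl; intros; ring
              _ = w i * b (τ i j) := by rw [hvp]
              _ = (w i • z i) j := by rw [← hτ' i hi]; simp
    rw [key, ← Finset.sum_apply, hcm]

lemma easy_dir {n : ℕ} {a b : Fin n → ℝ} {P : Matrix (Fin n) (Fin n) ℝ}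
    (hP : IsDoublyStochastic P) (ha : a = b ᵥ* P) : Majorizes b a := by
  classical
  have hPmem : P ∈ doublyStochastic ℝ (Fin n) :=
    mem_doublyStochastic_iff_sum.2 ⟨hP.1, hP.2.1, hP.2.2⟩
  obtain ⟨w, hw0, hw1, hw3⟩ := exists_eq_sum_perm_of_mem_doublyStochastic hPmem
  have haj : ∀ j, a j = ∑ σ : Equiv.Perm (Fin n), w σ * b (σ⁻¹ j) := by
    intro j
    rw [ha]
    calc (b ᵥ* P) j = ∑ k, b k * P k j := rfl
      _ = ∑ k, ∑ σ : Equiv.Perm (Fin n), b k * (w σ * (σ.permMatrix ℝ) k j) := by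
          apply Finset.sum_congr rfl
          intro k _
          rw [← hw3, Matrix.sum_apply, Finset.mul_sum]
          apply Finset.sum_congr rfl
          intro σ _
          rw [Matrix.smul_apply, smul_eq_mul]
      _ = ∑ σ : Equiv.Perm (Fin n), ∑ k, b k * (w σ * (σ.permMatrix ℝ) k j) := Finset.sum_comm
      _ = ∑ σ : Equiv.Perm (Fin n), w σ * b (σ⁻¹ j) := by
          apply Finset.sum_congr rfl
          intro σ _
          have hvp : ∑ k, b k * ((σ.permMatrix ℝ) k j) = b (σ⁻¹ j) := vecMul_permMatrix b σ j
          calc ∑ k, b k * (w σ * (σ.permMatrix ℝ) k j)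
              = w σ * ∑ k, b k * ((σ.permMatrix ℝ) k j) := by
                rw [Finset.mul_sum]; apply Finset.sum_congr rfl; intros; ring
            _ = w σ * b (σ⁻¹ j) := by rw [hvp]
  constructor
  · calc ∑ j, a j = ∑ j, ∑ i, b i * P i j := by
          apply Finset.sum_congr rfl; intro j _; rw [ha]; rfl
      _ = ∑ i, ∑ j, b i * P i j := Finset.sum_comm
      _ = ∑ i, b i := by
          apply Finset.sum_congr rfl
          intro i _
          rw [← Finset.mul_sum, hP.2.1 i, mul_one]
  · intro k hk1 hk2
    apply topSum_le a (by omega)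
    intro s hs
    calc ∑ j ∈ s, a j = ∑ j ∈ s, ∑ σ : Equiv.Perm (Fin n), w σ * b (σ⁻¹ j) := by
          apply Finset.sum_congr rfl; intro j _; exact haj j
      _ = ∑ σ : Equiv.Perm (Fin n), w σ * ∑ j ∈ s, b (σ⁻¹ j) := by
          rw [Finset.sum_comm]
          apply Finset.sum_congr rfl
          intros; rw [Finset.mul_sum]
      _ ≤ ∑ σ : Equiv.Perm (Fin n), w σ * topSum b k := by
          apply Finset.sum_le_sum
          intro σ _
          apply mul_le_mul_of_nonneg_left _ (hw0 σ)
          have : ∑ j ∈ s, b (σ⁻¹ j) = ∑ i ∈ s.map σ⁻¹.toEmbedding, b i := by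
            rw [Finset.sum_map]; rfl
          rw [this]
          exact le_topSum b (by simp [hs])
      _ = topSum b k := by rw [← Finset.sum_mul, hw1, one_mul]

theorem majorizes_iff_exists_doublyStochastic {n : ℕ} (a b : Fin n → ℝ) :
    Majorizes b a ↔
      ∃ P : Matrix (Fin n) (Fin n) ℝ, IsDoublyStochastic P ∧ a = b ᵥ* P := by
  constructor
  · exact fun h => hard_dir h
  · rintro ⟨P, hP, ha⟩
    exact easy_dir hP ha
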